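/- Let k ≥ 1 and let g_1, …, g_k be the free generators of the free group F_k, with λ the left regular representation on ℓ²(F_k). For every matrix A = (a_{ij}) ∈ M_k(ℂ) with Tr A = 0, one has k^{-1} ‖Σ_{i,j=1}^k a_{ij} λ(g_i g_j^{-1})‖ ≤ (3/k) ‖A‖₂, where ‖A‖₂ = (Σ_{i,j} |a_{ij}|²)^{1/2} is the Frobenius norm and the norm on the left is the operator norm on ℓ²(F_k). -/

import Mathlib

open scoped ENNReal

noncomputable section

variable {α : Type*}

private theorem lpShift_mem (e : α ≃ α) (ξ : lp (fun _ : α => ℂ) 2) :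
    Memℓp (fun x => ξ (e x)) (2 : ℝ≥0∞) := by
  have hp : 0 < (2 : ℝ≥0∞).toReal := by norm_num
  refine (memℓp_gen_iff hp).2 ?_
  exact e.summable_iff.2 ((memℓp_gen_iff hp).1 (lp.memℓp ξ))

/-- Composition with an index equivalence, as a continuous linear map on `ℓ²`. -/
def lpShift (e : α ≃ α) :
    lp (fun _ : α => ℂ) 2 →L[ℂ] lp (fun _ : α => ℂ) 2 :=
  LinearMap.mkContinuous
    { toFun := fun ξ => (⟨fun x => ξ (e x), lpShift_mem e ξ⟩ : lp (fun _ : α => ℂ) 2)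
      map_add' := fun ξ η => lp.ext <| funext fun x => by
        simp only [lp.coeFn_add, Pi.add_apply]
      map_smul' := fun c ξ => lp.ext <| funext fun x => by
        simp only [lp.coeFn_smul, Pi.smul_apply, RingHom.id_apply] } 1 <| by
    intro ξ
    have hp : 0 < (2 : ℝ≥0∞).toReal := by norm_num
    have : ‖(⟨fun x => ξ (e x), lpShift_mem e ξ⟩ : lp (fun _ : α => ℂ) 2)‖ = ‖ξ‖ := by
      rw [lp.norm_eq_tsum_rpow hp, lp.norm_eq_tsum_rpow hp]
      congr 1
      exact e.tsum_eq fun x => ‖ξ x‖ ^ (2 : ℝ≥0∞).toReal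
    simpa using this.le

/-- The left regular representation of a group `G` on `ℓ²(G)`:
`(lam g ξ) x = ξ (g⁻¹ * x)`. -/
def lam {G : Type*} [Group G] (g : G) :
    lp (fun _ : G => ℂ) 2 →L[ℂ] lp (fun _ : G => ℂ) 2 :=
  lpShift (Equiv.mulLeft g⁻¹)

/-! ### Auxiliary `ℓ²` lemmas -/

section l2
open scoped ComplexConjugate
variable {γ : Type*}

theorem l2_summable (f : lp (fun _ : γ => ℂ) 2) : Summable fun x => ‖f x‖ ^ 2 := by
  have hp : 0 < (2 : ℝ≥0∞).toReal := by norm_num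
  have h := (memℓp_gen_iff hp).1 (lp.memℓp f)
  have he : ∀ x, ‖f x‖ ^ (2 : ℝ≥0∞).toReal = ‖f x‖ ^ 2 := by
    intro x
    rw [show ((2:ℝ≥0∞).toReal) = ((2:ℕ):ℝ) by norm_num, Real.rpow_natCast]
  exact (summable_congr he).1 h

theorem l2_norm_sq (f : lp (fun _ : γ => ℂ) 2) : ‖f‖ ^ 2 = ∑' x, ‖f x‖ ^ 2 := by
  have hp : 0 < (2 : ℝ≥0∞).toReal := by norm_num
  have h := lp.norm_rpow_eq_tsum hp f
  have he : ∀ (r : ℝ), r ^ (2 : ℝ≥0∞).toReal = r ^ 2 := by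
    intro r
    rw [show ((2:ℝ≥0∞).toReal) = ((2:ℕ):ℝ) by norm_num, Real.rpow_natCast]
  rw [← he ‖f‖, h]
  exact tsum_congr fun x => he _

theorem l2_norm_le (f g : lp (fun _ : γ => ℂ) 2) (h : ∀ x, ‖f x‖ ≤ ‖g x‖) : ‖f‖ ≤ ‖g‖ := by
  have h2 : ‖f‖ ^ 2 ≤ ‖g‖ ^ 2 := by
    rw [l2_norm_sq, l2_norm_sq]
    exact Summable.tsum_le_tsum (fun x => pow_le_pow_left₀ (norm_nonneg _) (h x) 2)
      (l2_summable f) (l2_summable g)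
  exact (pow_le_pow_iff_left₀ (norm_nonneg f) (norm_nonneg g) two_ne_zero).1 h2

theorem l2_inner_eq (f g : lp (fun _ : γ => ℂ) 2) :
    (inner ℂ f g : ℂ) = ∑' x, conj (f x) * g x := by
  have := lp.inner_eq_tsum (𝕜 := ℂ) f g
  simpa [RCLike.inner_apply, mul_comm] using this

theorem l2_norm_sum_sq_orth {ι : Type*} (s : Finset ι) (v : ι → lp (fun _ : γ => ℂ) 2)
    (h : ∀ i ∈ s, ∀ j ∈ s, i ≠ j → ∀ x, v i x = 0 ∨ v j x = 0) :
    ‖∑ i ∈ s, v i‖ ^ 2 = ∑ i ∈ s, ‖v i‖ ^ 2 := by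
  classical
  induction s using Finset.induction_on with
  | empty => simp
  | @insert a s ha ih =>
    rw [Finset.sum_insert ha, Finset.sum_insert ha]
    have horth : (inner ℂ (v a) (∑ i ∈ s, v i) : ℂ) = 0 := by
      rw [inner_sum]
      refine Finset.sum_eq_zero fun j hj => ?_
      rw [l2_inner_eq]
      have hz : ∀ x : γ, conj ((v a) x) * (v j) x = 0 := fun x => by
        rcases h a (Finset.mem_insert_self a s) j (Finset.mem_insert_of_mem hj)
          (by rintro rfl; exact ha hj) x with h0 | h0 <;> simp [h0]
      simp [hz]
    rw [norm_add_sq (𝕜 := ℂ), horth, ih (fun i hi j hj => h i (Finset.mem_insert_of_mem hi)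
      j (Finset.mem_insert_of_mem hj))]
    simp

open Classical in
theorem E_mem (p : γ → Prop) (ξ : lp (fun _ : γ => ℂ) 2) :
    Memℓp (fun x => if p x then ξ x else 0) (2 : ℝ≥0∞) := by
  have hp : 0 < (2 : ℝ≥0∞).toReal := by norm_num
  refine (memℓp_gen_iff hp).2 ?_
  refine Summable.of_nonneg_of_le (fun x => by positivity) (fun x => ?_)
    ((memℓp_gen_iff hp).1 (lp.memℓp ξ))
  by_cases h : p x <;> simp [h] <;> positivity

open Classical in
/-- Restriction of an `ℓ²` vector to the set where `p` holds. -/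
def E (p : γ → Prop) (ξ : lp (fun _ : γ => ℂ) 2) : lp (fun _ : γ => ℂ) 2 :=
  ⟨fun x => if p x then ξ x else 0, E_mem p ξ⟩

open Classical in
theorem E_apply (p : γ → Prop) (ξ : lp (fun _ : γ => ℂ) 2) (x : γ) :
    (E p ξ) x = if p x then ξ x else 0 := rfl

theorem E_apply_of {p : γ → Prop} (ξ : lp (fun _ : γ => ℂ) 2) {x : γ} (h : p x) :
    (E p ξ) x = ξ x := by
  rw [E_apply]; exact if_pos h

theorem E_apply_of_not {p : γ → Prop} (ξ : lp (fun _ : γ => ℂ) 2) {x : γ} (h : ¬ p x) :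
    (E p ξ) x = 0 := by
  rw [E_apply]; exact if_neg h

theorem E_support {p : γ → Prop} (ξ : lp (fun _ : γ => ℂ) 2) {x : γ} (h : (E p ξ) x ≠ 0) :
    p x := by
  by_contra hc; exact h (E_apply_of_not ξ hc)

theorem E_add_compl (p : γ → Prop) (ξ : lp (fun _ : γ => ℂ) 2) :
    E p ξ + E (fun x => ¬ p x) ξ = ξ := by
  apply lp.ext
  funext x
  rw [lp.coeFn_add, Pi.add_apply]
  by_cases h : p x
  · rw [E_apply_of ξ h, E_apply_of_not ξ (fun hc => hc h), add_zero]
  · rw [E_apply_of_not ξ h, E_apply_of ξ h, zero_add]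

theorem E_norm_le (p : γ → Prop) (ξ : lp (fun _ : γ => ℂ) 2) : ‖E p ξ‖ ≤ ‖ξ‖ := by
  refine l2_norm_le _ _ fun x => ?_
  by_cases h : p x
  · rw [E_apply_of ξ h]
  · rw [E_apply_of_not ξ h]; simp

theorem sum_E_sq_le {ι : Type*} (P : ι → γ → Prop) (s : Finset ι)
    (hd : ∀ i ∈ s, ∀ j ∈ s, i ≠ j → ∀ x, ¬(P i x ∧ P j x)) (ξ : lp (fun _ : γ => ℂ) 2) :
    ∑ i ∈ s, ‖E (P i) ξ‖ ^ 2 ≤ ‖ξ‖ ^ 2 := by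
  rw [← l2_norm_sum_sq_orth s (fun i => E (P i) ξ) (fun i hi j hj hne x => by
    by_contra hc
    push_neg at hc
    exact hd i hi j hj hne x ⟨E_support ξ hc.1, E_support ξ hc.2⟩)]
  have hle : ‖∑ i ∈ s, E (P i) ξ‖ ≤ ‖ξ‖ := by
    refine l2_norm_le _ _ fun x => ?_
    rw [lp.coeFn_sum, Finset.sum_apply]
    by_cases hx : ∃ i ∈ s, P i x
    · obtain ⟨i₀, hi₀, hPi₀⟩ := hx
      rw [Finset.sum_eq_single_of_mem i₀ hi₀ (fun j hj hne =>
        E_apply_of_not ξ (fun hc => hd j hj i₀ hi₀ hne x ⟨hc, hPi₀⟩))]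
      rw [E_apply_of ξ hPi₀]
    · push_neg at hx
      rw [Finset.sum_eq_zero (fun j hj => E_apply_of_not ξ (hx j hj))]
      simp
  exact pow_le_pow_left₀ (norm_nonneg _) hle 2

theorem sum_apply_ne_zero {ι : Type*} (s : Finset ι) (v : ι → lp (fun _ : γ => ℂ) 2) (x : γ)
    (h : (∑ i ∈ s, v i) x ≠ 0) : ∃ i ∈ s, v i x ≠ 0 := by
  by_contra hc
  push_neg at hc
  rw [lp.coeFn_sum, Finset.sum_apply] at h
  exact h (Finset.sum_eq_zero hc)

theorem real_cs {ι : Type*} (s : Finset ι) (u v : ι → ℝ) (hu : ∀ i ∈ s, 0 ≤ u i)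
    (hv : ∀ i ∈ s, 0 ≤ v i) :
    ∑ i ∈ s, u i * v i ≤ Real.sqrt (∑ i ∈ s, u i ^ 2) * Real.sqrt (∑ i ∈ s, v i ^ 2) := by
  have h := Finset.sum_mul_sq_le_sq_mul_sq s u v
  have h0 : 0 ≤ ∑ i ∈ s, u i * v i :=
    Finset.sum_nonneg fun i hi => mul_nonneg (hu i hi) (hv i hi)
  calc ∑ i ∈ s, u i * v i = Real.sqrt ((∑ i ∈ s, u i * v i) ^ 2) := (Real.sqrt_sq h0).symm
    _ ≤ Real.sqrt ((∑ i ∈ s, u i ^ 2) * ∑ i ∈ s, v i ^ 2) := Real.sqrt_le_sqrt h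
    _ = _ := Real.sqrt_mul (Finset.sum_nonneg fun i _ => sq_nonneg _) _

theorem sq_le_sq_imp_le {a b : ℝ} (ha : 0 ≤ a) (hb : 0 ≤ b) (h : a ^ 2 ≤ b ^ 2) : a ≤ b :=
  (pow_le_pow_iff_left₀ ha hb two_ne_zero).1 h

end l2

/-! ### `lam` lemmas -/

section lamsec
variable {G : Type*} [Group G]

theorem lam_apply (g : G) (ξ : lp (fun _ : G => ℂ) 2) (x : G) :
    (lam g ξ) x = ξ (g⁻¹ * x) := rfl

theorem lam_norm (g : G) (ξ : lp (fun _ : G => ℂ) 2) : ‖lam g ξ‖ = ‖ξ‖ := by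
  have hp : 0 < (2 : ℝ≥0∞).toReal := by norm_num
  rw [lp.norm_eq_tsum_rpow hp, lp.norm_eq_tsum_rpow hp]
  congr 1
  exact (Equiv.mulLeft g⁻¹).tsum_eq fun x => ‖ξ x‖ ^ (2 : ℝ≥0∞).toReal

theorem lam_mul (g h : G) (ξ : lp (fun _ : G => ℂ) 2) :
    lam (g * h) ξ = lam g (lam h ξ) := by
  apply lp.ext
  funext x
  rw [lam_apply, lam_apply, lam_apply, mul_inv_rev, mul_assoc]

theorem lam_one (ξ : lp (fun _ : G => ℂ) 2) : lam (1 : G) ξ = ξ := by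
  apply lp.ext
  funext x
  rw [lam_apply, inv_one, one_mul]

end lamsec

/-! ### Free group head-letter combinatorics -/

section freegroup
variable {β : Type*} [DecidableEq β]

theorem letter_mul_toWord (l : β × Bool) (x : FreeGroup β)
    (h : x.toWord.head? ≠ some (l.1, !l.2)) :
    (FreeGroup.mk [l] * x).toWord = l :: x.toWord := by
  conv_lhs => rw [← FreeGroup.mk_toWord (x := x)]
  rw [FreeGroup.mul_mk, FreeGroup.toWord_mk, List.singleton_append, FreeGroup.reduce.cons,
    FreeGroup.reduce_toWord]
  rcases hx : x.toWord with _ | ⟨hd, tl⟩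
  · rfl
  · have hne : ¬ (l.1 = hd.1 ∧ l.2 = !hd.2) := by
      rintro ⟨h1, h2⟩
      apply h
      rw [hx]
      simp only [List.head?_cons, Option.some.injEq]
      ext
      · exact h1.symm
      · simp [h2]
    simp [hne]

theorem of_mul_toWord (i : β) (x : FreeGroup β) (h : x.toWord.head? ≠ some (i, false)) :
    (FreeGroup.of i * x).toWord = (i, true) :: x.toWord := by
  have hof : FreeGroup.of i = FreeGroup.mk [(i, true)] := rfl
  rw [hof]
  exact letter_mul_toWord (i, true) x (by simpa using h)

theorem inv_of_mul_toWord (j : β) (x : FreeGroup β) (h : x.toWord.head? ≠ some (j, true)) :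
    ((FreeGroup.of j)⁻¹ * x).toWord = (j, false) :: x.toWord := by
  have hof : (FreeGroup.of j)⁻¹ = FreeGroup.mk [(j, false)] := by
    rw [← FreeGroup.mk_toWord (x := (FreeGroup.of j)⁻¹)]
    simp [FreeGroup.toWord_inv, FreeGroup.invRev]
  rw [hof]
  exact letter_mul_toWord (j, false) x (by simpa using h)

theorem lam_of_support (i : β) (ξ : lp (fun _ : FreeGroup β => ℂ) 2)
    (hs : ∀ x, ξ x ≠ 0 → x.toWord.head? ≠ some (i, false)) :
    ∀ w, (lam (FreeGroup.of i) ξ) w ≠ 0 → w.toWord.head? = some (i, true) := by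
  intro w hw
  rw [lam_apply] at hw
  have hx := hs _ hw
  have hw' : FreeGroup.of i * ((FreeGroup.of i)⁻¹ * w) = w := by group
  rw [← hw', of_mul_toWord i _ hx]
  rfl

theorem lam_inv_of_support (j : β) (ξ : lp (fun _ : FreeGroup β => ℂ) 2)
    (hs : ∀ x, ξ x ≠ 0 → x.toWord.head? ≠ some (j, true)) :
    ∀ w, (lam (FreeGroup.of j)⁻¹ ξ) w ≠ 0 → w.toWord.head? = some (j, false) := by
  intro w hw
  rw [lam_apply, inv_inv] at hw
  have hx := hs _ hw
  have hw' : (FreeGroup.of j)⁻¹ * (FreeGroup.of j * w) = w := by group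
  rw [← hw', inv_of_mul_toWord j _ hx]
  rfl

end freegroup


set_option maxHeartbeats 1000000

namespace Haag

variable {k : ℕ}

private def Xi1 (ξ : lp (fun _ : FreeGroup (Fin k) => ℂ) 2) (j : Fin k) :
    lp (fun _ : FreeGroup (Fin k) => ℂ) 2 :=
  E (fun x => x.toWord.head? = some (j, true)) ξ

private def Xi0 (ξ : lp (fun _ : FreeGroup (Fin k) => ℂ) 2) (j : Fin k) :
    lp (fun _ : FreeGroup (Fin k) => ℂ) 2 :=
  E (fun x => ¬ x.toWord.head? = some (j, true)) ξ

private def Eta (ξ : lp (fun _ : FreeGroup (Fin k) => ℂ) 2) (j : Fin k) :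
    lp (fun _ : FreeGroup (Fin k) => ℂ) 2 :=
  lam (FreeGroup.of j)⁻¹ (Xi1 ξ j)

private def Eta1 (ξ : lp (fun _ : FreeGroup (Fin k) => ℂ) 2) (i j : Fin k) :
    lp (fun _ : FreeGroup (Fin k) => ℂ) 2 :=
  E (fun x => x.toWord.head? = some (i, false)) (Eta ξ j)

private def Eta0 (ξ : lp (fun _ : FreeGroup (Fin k) => ℂ) 2) (i j : Fin k) :
    lp (fun _ : FreeGroup (Fin k) => ℂ) 2 :=
  E (fun x => ¬ x.toWord.head? = some (i, false)) (Eta ξ j)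

private def Kap (A : Matrix (Fin k) (Fin k) ℂ) (ξ : lp (fun _ : FreeGroup (Fin k) => ℂ) 2)
    (i : Fin k) : lp (fun _ : FreeGroup (Fin k) => ℂ) 2 :=
  ∑ j ∈ Finset.univ.erase i, A i j • lam (FreeGroup.of j)⁻¹ (Xi0 ξ j)

private def Zet (A : Matrix (Fin k) (Fin k) ℂ) (ξ : lp (fun _ : FreeGroup (Fin k) => ℂ) 2)
    (i : Fin k) : lp (fun _ : FreeGroup (Fin k) => ℂ) 2 :=
  ∑ j ∈ Finset.univ.erase i, A i j • Eta0 ξ i j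

private theorem decomp (A : Matrix (Fin k) (Fin k) ℂ) (hA : A.trace = 0)
    (ξ : lp (fun _ : FreeGroup (Fin k) => ℂ) 2) :
    (∑ i : Fin k, ∑ j : Fin k, A i j • lam (FreeGroup.of i * (FreeGroup.of j)⁻¹)) ξ
      = (∑ i : Fin k, lam (FreeGroup.of i) (Kap A ξ i))
        + (∑ i : Fin k, lam (FreeGroup.of i) (Zet A ξ i))
        + ∑ i : Fin k, ∑ j ∈ Finset.univ.erase i,
            A i j • lam (FreeGroup.of i) (Eta1 ξ i j) := by
  have happ : (∑ i : Fin k, ∑ j : Fin k, A i j • lam (FreeGroup.of i * (FreeGroup.of j)⁻¹)) ξ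
      = ∑ i : Fin k, ∑ j : Fin k, A i j • lam (FreeGroup.of i * (FreeGroup.of j)⁻¹) ξ := by
    simp only [ContinuousLinearMap.sum_apply, ContinuousLinearMap.smul_apply]
  rw [happ]
  have hsplit : ∀ i : Fin k, (∑ j : Fin k, A i j • lam (FreeGroup.of i * (FreeGroup.of j)⁻¹) ξ)
      = (∑ j ∈ Finset.univ.erase i, A i j • lam (FreeGroup.of i * (FreeGroup.of j)⁻¹) ξ)
        + A i i • ξ := by
    intro i
    rw [← Finset.sum_erase_add Finset.univ _ (Finset.mem_univ i)]
    congr 1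
    rw [mul_inv_cancel, lam_one]
  simp only [hsplit]
  rw [Finset.sum_add_distrib]
  have hdiag : (∑ i : Fin k, A i i • ξ) = 0 := by
    rw [← Finset.sum_smul]
    have : (∑ i : Fin k, A i i) = 0 := by simpa [Matrix.trace, Matrix.diag] using hA
    rw [this, zero_smul]
  rw [hdiag, add_zero]
  have hterm : ∀ i : Fin k, ∀ j ∈ Finset.univ.erase i,
      A i j • lam (FreeGroup.of i * (FreeGroup.of j)⁻¹) ξ
        = A i j • lam (FreeGroup.of i) (lam (FreeGroup.of j)⁻¹ (Xi0 ξ j))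
          + A i j • lam (FreeGroup.of i) (Eta0 ξ i j)
          + A i j • lam (FreeGroup.of i) (Eta1 ξ i j) := by
    intro i j _
    have hξsplit : ξ = Xi1 ξ j + Xi0 ξ j := (E_add_compl _ ξ).symm
    have hη : Eta ξ j = Eta1 ξ i j + Eta0 ξ i j := (E_add_compl _ (Eta ξ j)).symm
    calc A i j • lam (FreeGroup.of i * (FreeGroup.of j)⁻¹) ξ
        = A i j • lam (FreeGroup.of i) (lam (FreeGroup.of j)⁻¹ ξ) := by rw [lam_mul]
      _ = A i j • lam (FreeGroup.of i) (Eta ξ j + lam (FreeGroup.of j)⁻¹ (Xi0 ξ j)) := by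
          conv_lhs => rw [hξsplit]
          rw [map_add]
          rfl
      _ = _ := by
          rw [hη, map_add, map_add, smul_add, smul_add]
          abel
  calc ∑ i : Fin k, ∑ j ∈ Finset.univ.erase i,
        A i j • lam (FreeGroup.of i * (FreeGroup.of j)⁻¹) ξ
      = ∑ i : Fin k, ∑ j ∈ Finset.univ.erase i,
          (A i j • lam (FreeGroup.of i) (lam (FreeGroup.of j)⁻¹ (Xi0 ξ j))
            + A i j • lam (FreeGroup.of i) (Eta0 ξ i j)
            + A i j • lam (FreeGroup.of i) (Eta1 ξ i j)) :=
        Finset.sum_congr rfl fun i _ => Finset.sum_congr rfl fun j hj => hterm i j hj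
    _ = _ := by
        simp only [Finset.sum_add_distrib]
        congr 1
        · congr 1
          · refine Finset.sum_congr rfl fun i _ => ?_
            rw [Kap, map_sum]
            exact Finset.sum_congr rfl fun j _ => by rw [map_smul]
          · refine Finset.sum_congr rfl fun i _ => ?_
            rw [Zet, map_sum]
            exact Finset.sum_congr rfl fun j _ => by rw [map_smul]


private theorem smul_ne_zero_imp {γ : Type*} (c : ℂ) (f : lp (fun _ : γ => ℂ) 2) (x : γ)
    (h : (c • f) x ≠ 0) : f x ≠ 0 := by
  intro h0
  apply h
  rw [lp.coeFn_smul, Pi.smul_apply, h0, smul_zero]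

/-- Support of `lam (of i) (Kap A ξ i)` consists of words with head `(i, true)`. -/
private theorem Kap_support (A : Matrix (Fin k) (Fin k) ℂ)
    (ξ : lp (fun _ : FreeGroup (Fin k) => ℂ) 2) (i : Fin k) :
    ∀ w, (lam (FreeGroup.of i) (Kap A ξ i)) w ≠ 0 → w.toWord.head? = some (i, true) := by
  refine lam_of_support i _ fun x hx => ?_
  obtain ⟨j, hj, hxj⟩ := sum_apply_ne_zero _ _ _ hx
  have hj' : j ≠ i := (Finset.mem_erase.1 hj).1
  have h1 : (lam (FreeGroup.of j)⁻¹ (Xi0 ξ j)) x ≠ 0 := smul_ne_zero_imp _ _ _ hxj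
  have h2 : x.toWord.head? = some (j, false) :=
    lam_inv_of_support j (Xi0 ξ j) (fun y hy => E_support ξ hy) x h1
  rw [h2]
  intro hc
  exact hj' (by simpa using hc)

private theorem Zet_support (A : Matrix (Fin k) (Fin k) ℂ)
    (ξ : lp (fun _ : FreeGroup (Fin k) => ℂ) 2) (i : Fin k) :
    ∀ w, (lam (FreeGroup.of i) (Zet A ξ i)) w ≠ 0 → w.toWord.head? = some (i, true) := by
  refine lam_of_support i _ fun x hx => ?_
  obtain ⟨j, hj, hxj⟩ := sum_apply_ne_zero _ _ _ hx
  exact E_support (Eta ξ j) (smul_ne_zero_imp _ _ _ hxj)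

private theorem orth_of_head (v : Fin k → lp (fun _ : FreeGroup (Fin k) => ℂ) 2)
    (hv : ∀ i, ∀ w, v i w ≠ 0 → w.toWord.head? = some (i, true)) :
    ‖∑ i : Fin k, v i‖ ^ 2 = ∑ i : Fin k, ‖v i‖ ^ 2 := by
  refine l2_norm_sum_sq_orth _ _ fun i _ j _ hij x => ?_
  by_contra hc
  push_neg at hc
  have h1 := hv i x hc.1
  have h2 := hv j x hc.2
  rw [h1] at h2
  exact hij (by simpa using h2)

private theorem sum_Xi1_sq_le (ξ : lp (fun _ : FreeGroup (Fin k) => ℂ) 2) :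
    ∑ j : Fin k, ‖Xi1 ξ j‖ ^ 2 ≤ ‖ξ‖ ^ 2 := by
  refine sum_E_sq_le _ _ (fun i _ j _ hij x => ?_) ξ
  rintro ⟨h1, h2⟩
  rw [h1] at h2
  exact hij (by simpa using h2)

private theorem bound0 (A : Matrix (Fin k) (Fin k) ℂ)
    (ξ : lp (fun _ : FreeGroup (Fin k) => ℂ) 2) :
    ‖∑ i : Fin k, lam (FreeGroup.of i) (Kap A ξ i)‖
      ≤ Real.sqrt (∑ i : Fin k, ∑ j : Fin k, ‖A i j‖ ^ 2) * ‖ξ‖ := by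
  set B := Real.sqrt (∑ i : Fin k, ∑ j : Fin k, ‖A i j‖ ^ 2) with hBdef
  have hB2 : B ^ 2 = ∑ i : Fin k, ∑ j : Fin k, ‖A i j‖ ^ 2 :=
    Real.sq_sqrt (by positivity)
  have hBnn : 0 ≤ B := by rw [hBdef]; exact Real.sqrt_nonneg _
  refine sq_le_sq_imp_le (norm_nonneg _) (mul_nonneg hBnn (norm_nonneg _)) ?_
  rw [orth_of_head _ (Kap_support A ξ), mul_pow, hB2]
  have hKap : ∀ i : Fin k, ‖lam (FreeGroup.of i) (Kap A ξ i)‖ ^ 2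
      ≤ (∑ j : Fin k, ‖A i j‖ ^ 2) * ‖ξ‖ ^ 2 := by
    intro i
    rw [lam_norm, Kap]
    rw [l2_norm_sum_sq_orth _ _ (fun j hj j' hj' hjj' x => ?_)]
    · calc ∑ j ∈ Finset.univ.erase i, ‖A i j • lam (FreeGroup.of j)⁻¹ (Xi0 ξ j)‖ ^ 2
          ≤ ∑ j ∈ Finset.univ.erase i, ‖A i j‖ ^ 2 * ‖ξ‖ ^ 2 := by
            refine Finset.sum_le_sum fun j _ => ?_
            rw [norm_smul, mul_pow, lam_norm]
            exact mul_le_mul_of_nonneg_left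
              (pow_le_pow_left₀ (norm_nonneg _) (E_norm_le _ ξ) 2)
              (pow_nonneg (norm_nonneg _) 2)
        _ ≤ ∑ j : Fin k, ‖A i j‖ ^ 2 * ‖ξ‖ ^ 2 :=
            Finset.sum_le_sum_of_subset_of_nonneg (Finset.subset_univ _)
              (fun _ _ _ => mul_nonneg (pow_nonneg (norm_nonneg _) 2)
                (pow_nonneg (norm_nonneg _) 2))
        _ = (∑ j : Fin k, ‖A i j‖ ^ 2) * ‖ξ‖ ^ 2 := by rw [Finset.sum_mul]
    · by_contra hc
      push_neg at hc
      have h1 : x.toWord.head? = some (j, false) :=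
        lam_inv_of_support j (Xi0 ξ j) (fun y hy => E_support ξ hy) x
          (smul_ne_zero_imp _ _ _ hc.1)
      have h2 : x.toWord.head? = some (j', false) :=
        lam_inv_of_support j' (Xi0 ξ j') (fun y hy => E_support ξ hy) x
          (smul_ne_zero_imp _ _ _ hc.2)
      rw [h1] at h2
      exact hjj' (by simpa using h2)
  calc ∑ i : Fin k, ‖lam (FreeGroup.of i) (Kap A ξ i)‖ ^ 2
      ≤ ∑ i : Fin k, (∑ j : Fin k, ‖A i j‖ ^ 2) * ‖ξ‖ ^ 2 := Finset.sum_le_sum fun i _ => hKap i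
    _ = (∑ i : Fin k, ∑ j : Fin k, ‖A i j‖ ^ 2) * ‖ξ‖ ^ 2 := by rw [Finset.sum_mul]


private theorem bound1 (A : Matrix (Fin k) (Fin k) ℂ)
    (ξ : lp (fun _ : FreeGroup (Fin k) => ℂ) 2) :
    ‖∑ i : Fin k, lam (FreeGroup.of i) (Zet A ξ i)‖
      ≤ Real.sqrt (∑ i : Fin k, ∑ j : Fin k, ‖A i j‖ ^ 2) * ‖ξ‖ := by
  set B := Real.sqrt (∑ i : Fin k, ∑ j : Fin k, ‖A i j‖ ^ 2) with hBdef
  have hB2 : B ^ 2 = ∑ i : Fin k, ∑ j : Fin k, ‖A i j‖ ^ 2 :=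
    Real.sq_sqrt (by positivity)
  have hBnn : 0 ≤ B := by rw [hBdef]; exact Real.sqrt_nonneg _
  refine sq_le_sq_imp_le (norm_nonneg _) (mul_nonneg hBnn (norm_nonneg _)) ?_
  rw [orth_of_head _ (Zet_support A ξ), mul_pow, hB2]
  have hZet : ∀ i : Fin k, ‖Zet A ξ i‖ ^ 2 ≤ (∑ j : Fin k, ‖A i j‖ ^ 2) * ‖ξ‖ ^ 2 := by
    intro i
    have h1 : ‖Zet A ξ i‖ ≤ ∑ j ∈ Finset.univ.erase i, ‖A i j‖ * ‖Xi1 ξ j‖ := by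
      refine (norm_sum_le _ _).trans (Finset.sum_le_sum fun j _ => ?_)
      rw [norm_smul]
      refine mul_le_mul_of_nonneg_left ((E_norm_le _ _).trans ?_) (norm_nonneg _)
      rw [Eta, lam_norm]
    have h2 : ‖Zet A ξ i‖ ^ 2 ≤ (∑ j ∈ Finset.univ.erase i, ‖A i j‖ * ‖Xi1 ξ j‖) ^ 2 :=
      pow_le_pow_left₀ (norm_nonneg _) h1 2
    refine h2.trans ((Finset.sum_mul_sq_le_sq_mul_sq _ _ _).trans ?_)
    have ha : (∑ j ∈ Finset.univ.erase i, ‖A i j‖ ^ 2) ≤ ∑ j : Fin k, ‖A i j‖ ^ 2 :=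
      Finset.sum_le_sum_of_subset_of_nonneg (Finset.subset_univ _)
        (fun _ _ _ => pow_nonneg (norm_nonneg _) 2)
    have hb : (∑ j ∈ Finset.univ.erase i, ‖Xi1 ξ j‖ ^ 2) ≤ ‖ξ‖ ^ 2 :=
      le_trans (Finset.sum_le_sum_of_subset_of_nonneg (Finset.subset_univ _)
        (fun _ _ _ => pow_nonneg (norm_nonneg _) 2)) (sum_Xi1_sq_le ξ)
    exact mul_le_mul ha hb (Finset.sum_nonneg fun _ _ => pow_nonneg (norm_nonneg _) 2)
      (Finset.sum_nonneg fun _ _ => pow_nonneg (norm_nonneg _) 2)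
  calc ∑ i : Fin k, ‖lam (FreeGroup.of i) (Zet A ξ i)‖ ^ 2
      = ∑ i : Fin k, ‖Zet A ξ i‖ ^ 2 := by
        exact Finset.sum_congr rfl fun i _ => by rw [lam_norm]
    _ ≤ ∑ i : Fin k, (∑ j : Fin k, ‖A i j‖ ^ 2) * ‖ξ‖ ^ 2 := Finset.sum_le_sum fun i _ => hZet i
    _ = (∑ i : Fin k, ∑ j : Fin k, ‖A i j‖ ^ 2) * ‖ξ‖ ^ 2 := by rw [Finset.sum_mul]

private theorem bound2 (A : Matrix (Fin k) (Fin k) ℂ)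
    (ξ : lp (fun _ : FreeGroup (Fin k) => ℂ) 2) :
    ‖∑ i : Fin k, ∑ j ∈ Finset.univ.erase i, A i j • lam (FreeGroup.of i) (Eta1 ξ i j)‖
      ≤ Real.sqrt (∑ i : Fin k, ∑ j : Fin k, ‖A i j‖ ^ 2) * ‖ξ‖ := by
  set B := Real.sqrt (∑ i : Fin k, ∑ j : Fin k, ‖A i j‖ ^ 2) with hBdef
  have hBnn : 0 ≤ B := by rw [hBdef]; exact Real.sqrt_nonneg _
  have h1 : ‖∑ i : Fin k, ∑ j ∈ Finset.univ.erase i, A i j • lam (FreeGroup.of i) (Eta1 ξ i j)‖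
      ≤ ∑ i : Fin k, ∑ j ∈ Finset.univ.erase i, ‖A i j‖ * ‖Eta1 ξ i j‖ := by
    refine (norm_sum_le _ _).trans (Finset.sum_le_sum fun i _ => ?_)
    refine (norm_sum_le _ _).trans (Finset.sum_le_sum fun j _ => ?_)
    rw [norm_smul, lam_norm]
  refine h1.trans ?_
  have h2 : ∀ i : Fin k, ∑ j ∈ Finset.univ.erase i, ‖A i j‖ * ‖Eta1 ξ i j‖
      ≤ Real.sqrt (∑ j ∈ Finset.univ.erase i, ‖A i j‖ ^ 2)
        * Real.sqrt (∑ j ∈ Finset.univ.erase i, ‖Eta1 ξ i j‖ ^ 2) := fun i =>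
    real_cs _ _ _ (fun _ _ => norm_nonneg _) (fun _ _ => norm_nonneg _)
  refine (Finset.sum_le_sum fun i _ => h2 i).trans ?_
  have h3 : ∑ i : Fin k, Real.sqrt (∑ j ∈ Finset.univ.erase i, ‖A i j‖ ^ 2)
        * Real.sqrt (∑ j ∈ Finset.univ.erase i, ‖Eta1 ξ i j‖ ^ 2)
      ≤ Real.sqrt (∑ i : Fin k, ∑ j ∈ Finset.univ.erase i, ‖A i j‖ ^ 2)
        * Real.sqrt (∑ i : Fin k, ∑ j ∈ Finset.univ.erase i, ‖Eta1 ξ i j‖ ^ 2) := by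
    have := real_cs Finset.univ
      (fun i : Fin k => Real.sqrt (∑ j ∈ Finset.univ.erase i, ‖A i j‖ ^ 2))
      (fun i : Fin k => Real.sqrt (∑ j ∈ Finset.univ.erase i, ‖Eta1 ξ i j‖ ^ 2))
      (fun _ _ => Real.sqrt_nonneg _) (fun _ _ => Real.sqrt_nonneg _)
    refine this.trans ?_
    have he : ∀ (f : Fin k → ℝ), (∀ i, 0 ≤ f i) →
        (∑ i : Fin k, Real.sqrt (f i) ^ 2) = ∑ i : Fin k, f i := fun f hf =>
      Finset.sum_congr rfl fun i _ => Real.sq_sqrt (hf i)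
    rw [he (fun i => ∑ j ∈ Finset.univ.erase i, ‖A i j‖ ^ 2) (fun i => Finset.sum_nonneg fun _ _ => pow_nonneg (norm_nonneg _) 2),
      he (fun i => ∑ j ∈ Finset.univ.erase i, ‖Eta1 ξ i j‖ ^ 2) (fun i => Finset.sum_nonneg fun _ _ => pow_nonneg (norm_nonneg _) 2)]
  refine h3.trans ?_
  have hA : Real.sqrt (∑ i : Fin k, ∑ j ∈ Finset.univ.erase i, ‖A i j‖ ^ 2) ≤ B := by
    rw [hBdef]
    refine Real.sqrt_le_sqrt (Finset.sum_le_sum fun i _ =>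
      Finset.sum_le_sum_of_subset_of_nonneg (Finset.subset_univ _)
        (fun _ _ _ => pow_nonneg (norm_nonneg _) 2))
  have hE : Real.sqrt (∑ i : Fin k, ∑ j ∈ Finset.univ.erase i, ‖Eta1 ξ i j‖ ^ 2) ≤ ‖ξ‖ := by
    have hswap : ∑ i : Fin k, ∑ j ∈ Finset.univ.erase i, ‖Eta1 ξ i j‖ ^ 2
        = ∑ j : Fin k, ∑ i ∈ Finset.univ.erase j, ‖Eta1 ξ i j‖ ^ 2 := by
      rw [Finset.sum_comm' (t' := Finset.univ) (s' := fun j => Finset.univ.erase j)]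
      intro i j
      simp only [Finset.mem_univ, Finset.mem_erase, and_true, true_and]
      exact ne_comm
    have hj : ∀ j : Fin k, ∑ i ∈ Finset.univ.erase j, ‖Eta1 ξ i j‖ ^ 2 ≤ ‖Xi1 ξ j‖ ^ 2 := by
      intro j
      have := sum_E_sq_le (fun i : Fin k => fun x : FreeGroup (Fin k) =>
        x.toWord.head? = some (i, false)) (Finset.univ.erase j)
        (fun i _ i' _ hii' x => by
          rintro ⟨hx1, hx2⟩
          rw [hx1] at hx2
          exact hii' (by simpa using hx2)) (Eta ξ j)
      refine this.trans ?_
      rw [Eta, lam_norm]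
    rw [hswap]
    have : ∑ j : Fin k, ∑ i ∈ Finset.univ.erase j, ‖Eta1 ξ i j‖ ^ 2 ≤ ‖ξ‖ ^ 2 :=
      le_trans (Finset.sum_le_sum fun j _ => hj j) (sum_Xi1_sq_le ξ)
    refine Real.sqrt_le_sqrt this |>.trans ?_
    rw [Real.sqrt_sq (norm_nonneg _)]
  exact mul_le_mul hA hE (Real.sqrt_nonneg _) hBnn

end Haag

/-- For any traceless matrix `A ∈ M_k(ℂ)`, the operator norm of
`k⁻¹ ∑_{i,j} a_{ij} λ(gᵢ gⱼ⁻¹)` (where `g₁, …, g_k` are the free generators of `F_k`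
and `λ` is the left regular representation on `ℓ²(F_k)`) is bounded by
`(3/k) ‖A‖₂`, where `‖A‖₂` is the Frobenius norm. -/
theorem haagerup_bound_traceless {k : ℕ} (hk : 1 ≤ k)
    (A : Matrix (Fin k) (Fin k) ℂ) (hA : A.trace = 0) :
    (k : ℝ)⁻¹ * ‖∑ i : Fin k, ∑ j : Fin k,
        A i j • lam (FreeGroup.of i * (FreeGroup.of j)⁻¹)‖ ≤
      (3 / k) * Real.sqrt (∑ i : Fin k, ∑ j : Fin k, ‖A i j‖ ^ 2) := by
  set S := ∑ i : Fin k, ∑ j : Fin k, A i j • lam (FreeGroup.of i * (FreeGroup.of j)⁻¹) with hS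
  set B := Real.sqrt (∑ i : Fin k, ∑ j : Fin k, ‖A i j‖ ^ 2) with hBdef
  have hBnn : 0 ≤ B := by rw [hBdef]; exact Real.sqrt_nonneg _
  have hop : ‖S‖ ≤ 3 * B := by
    refine ContinuousLinearMap.opNorm_le_bound _ (by linarith) fun ξ => ?_
    rw [hS, Haag.decomp A hA ξ]
    calc ‖(∑ i : Fin k, lam (FreeGroup.of i) (Haag.Kap A ξ i))
          + (∑ i : Fin k, lam (FreeGroup.of i) (Haag.Zet A ξ i))
          + ∑ i : Fin k, ∑ j ∈ Finset.univ.erase i,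
              A i j • lam (FreeGroup.of i) (Haag.Eta1 ξ i j)‖
        ≤ ‖(∑ i : Fin k, lam (FreeGroup.of i) (Haag.Kap A ξ i))
            + (∑ i : Fin k, lam (FreeGroup.of i) (Haag.Zet A ξ i))‖
          + ‖∑ i : Fin k, ∑ j ∈ Finset.univ.erase i,
              A i j • lam (FreeGroup.of i) (Haag.Eta1 ξ i j)‖ := norm_add_le _ _
      _ ≤ (‖∑ i : Fin k, lam (FreeGroup.of i) (Haag.Kap A ξ i)‖
            + ‖∑ i : Fin k, lam (FreeGroup.of i) (Haag.Zet A ξ i)‖)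
          + ‖∑ i : Fin k, ∑ j ∈ Finset.univ.erase i,
              A i j • lam (FreeGroup.of i) (Haag.Eta1 ξ i j)‖ :=
          add_le_add_left (norm_add_le _ _) _
      _ ≤ (B * ‖ξ‖ + B * ‖ξ‖) + B * ‖ξ‖ :=
          add_le_add (add_le_add (Haag.bound0 A ξ) (Haag.bound1 A ξ)) (Haag.bound2 A ξ)
      _ = 3 * B * ‖ξ‖ := by ring
  have hk0 : (0:ℝ) < (k:ℝ) := by exact_mod_cast hk
  calc (k:ℝ)⁻¹ * ‖S‖ ≤ (k:ℝ)⁻¹ * (3 * B) :=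
        mul_le_mul_of_nonneg_left hop (inv_nonneg.2 hk0.le)
    _ = 3 / (k:ℝ) * B := by field_simp
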